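/- For every integer n with 1 ≤ n ≤ k-1 and n of the pentagonal form n = m(3m±1)/2 for some positive integer m, we have D_k^e(n) - D_k^o(n) = (-1)^m; and for 1 ≤ n ≤ k-1 not of this form, D_k^e(n) = D_k^o(n). -/
import Mathlib

open Finset

set_option linter.unusedSectionVars false

namespace PNT

def mxx (A : Finset ℕ) : ℕ := A.sup id
noncomputable def mnn (A : Finset ℕ) : ℕ := sInf (A : Set ℕ)
noncomputable def stair (A : Finset ℕ) : ℕ := sInf {i : ℕ | 0 < i ∧ mxx A - i ∉ A}

lemma le_mxx {A : Finset ℕ} {x : ℕ} (hx : x ∈ A) : x ≤ mxx A := Finset.le_sup (f := id) hx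

lemma mxx_mem {A : Finset ℕ} (h : A.Nonempty) : mxx A ∈ A := by
  obtain ⟨b, hb, hb'⟩ := Finset.exists_mem_eq_sup A h id
  rw [mxx, hb']; exact hb

lemma mnn_le {A : Finset ℕ} {x : ℕ} (hx : x ∈ A) : mnn A ≤ x := Nat.sInf_le hx

lemma mnn_mem {A : Finset ℕ} (h : A.Nonempty) : mnn A ∈ A :=
  Nat.sInf_mem (s := (A : Set ℕ)) ⟨h.choose, h.choose_spec⟩

section
variable {A : Finset ℕ} (h0 : 0 ∉ A) (hne : A.Nonempty)
include h0 hne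

lemma mxx_pos : 0 < mxx A := by
  rcases Nat.eq_zero_or_pos (mxx A) with h | h
  · exact absurd (h ▸ mxx_mem hne) h0
  · exact h

lemma stair_spec : 0 < stair A ∧ mxx A - stair A ∉ A := by
  have hne' : {i : ℕ | 0 < i ∧ mxx A - i ∉ A}.Nonempty :=
    ⟨mxx A, mxx_pos h0 hne, by simpa using h0⟩
  exact Nat.sInf_mem hne'

lemma stair_pos : 0 < stair A := (stair_spec h0 hne).1

lemma stair_notMem : mxx A - stair A ∉ A := (stair_spec h0 hne).2

lemma stair_le : stair A ≤ mxx A :=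
  Nat.sInf_le ⟨mxx_pos h0 hne, by simpa using h0⟩

lemma stair_run {x : ℕ} (h1 : mxx A - stair A < x) (h2 : x ≤ mxx A) : x ∈ A := by
  by_contra hx
  have hxa : 0 < mxx A - x ∨ x = mxx A := by omega
  rcases hxa with h | h
  · have hmem : mxx A - x ∈ {i : ℕ | 0 < i ∧ mxx A - i ∉ A} := by
      refine ⟨h, ?_⟩
      have : mxx A - (mxx A - x) = x := by omega
      rw [this]; exact hx
    have h5 : stair A ≤ mxx A - x := Nat.sInf_le hmem
    omega
  · exact hx (h ▸ mxx_mem hne)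

lemma mnn_pos : 0 < mnn A := by
  rcases Nat.eq_zero_or_pos (mnn A) with h | h
  · exact absurd (h ▸ mnn_mem hne) h0
  · exact h

end

noncomputable def fr (A : Finset ℕ) : Finset ℕ :=
  if mnn A ≤ stair A then insert (mxx A + 1) ((A.erase (mnn A)).erase (mxx A + 1 - mnn A))
  else insert (stair A) (insert (mxx A - stair A) (A.erase (mxx A)))

def Exc (A : Finset ℕ) : Prop :=
  ∃ r : ℕ, 0 < r ∧ (A = Finset.Icc r (2*r - 1) ∨ A = Finset.Icc (r+1) (2*r))

section
variable {A : Finset ℕ} (h0 : 0 ∉ A) (hne : A.Nonempty) (hexc : ¬ Exc A)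
include h0 hne hexc

lemma step1 (hle : mnn A ≤ stair A) :
    0 ∉ fr A ∧ (fr A).sum id = A.sum id ∧ (fr A).card + 1 = A.card ∧
      ¬ Exc (fr A) ∧ fr (fr A) = A := by
  set a := mxx A with ha
  set s := mnn A with hs
  set t := stair A with ht
  have hsmem : s ∈ A := mnn_mem hne
  have hspos : 0 < s := mnn_pos h0 hne
  have hsale : s ≤ a := le_mxx hsmem
  have htle : t ≤ a := stair_le h0 hne
  have htpos : 0 < t := stair_pos h0 hne
  have hneeded : a + 1 - s ∈ A := by
    apply stair_run h0 hne <;> omega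
  have hsants : s ≤ a + 1 - s := mnn_le hneeded
  have h2s : 2 * s ≤ a := by
    by_contra hcon
    push_neg at hcon
    apply hexc
    refine ⟨s, hspos, Or.inl ?_⟩
    ext x
    simp only [Finset.mem_Icc]
    constructor
    · intro hx
      exact ⟨mnn_le hx, by have := le_mxx hx; omega⟩
    · intro ⟨hx1, hx2⟩
      apply stair_run h0 hne <;> omega
  set C := (A.erase s).erase (a + 1 - s) with hC
  have hCmem : ∀ x, x ∈ C ↔ x ∈ A ∧ x ≠ s ∧ x ≠ a + 1 - s := by
    intro x; simp only [hC, Finset.mem_erase]; tauto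
  have hfrA : fr A = insert (a + 1) C := by
    rw [fr, if_pos hle]
  have hnotin : a + 1 ∉ C := by
    intro hx
    have := le_mxx ((hCmem _).1 hx).1
    omega
  have hmemB : ∀ x, x ∈ fr A ↔ x = a + 1 ∨ (x ∈ A ∧ x ≠ s ∧ x ≠ a + 1 - s) := by
    intro x; rw [hfrA, Finset.mem_insert, hCmem x]
  have hin1 : a + 1 - s ∈ A.erase s := by
    rw [Finset.mem_erase]; exact ⟨by omega, hneeded⟩
  have hsum1 : C.sum id + (a + 1 - s) = (A.erase s).sum id := Finset.sum_erase_add _ _ hin1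
  have hsum2 : (A.erase s).sum id + s = A.sum id := Finset.sum_erase_add _ _ hsmem
  have hsumB : (fr A).sum id = C.sum id + (a + 1) := by
    rw [hfrA, Finset.sum_insert hnotin]; simp [add_comm]
  have hsum : (fr A).sum id = A.sum id := by omega
  have hcard1 : C.card + 1 = (A.erase s).card := Finset.card_erase_add_one hin1
  have hcard2 : (A.erase s).card + 1 = A.card := Finset.card_erase_add_one hsmem
  have hcardB : (fr A).card = C.card + 1 := by
    rw [hfrA, Finset.card_insert_of_notMem hnotin]
  have hcard : (fr A).card + 1 = A.card := by omega
  have h0B : 0 ∉ fr A := by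
    rw [hmemB]; push_neg
    constructor
    · omega
    · intro h; exact absurd h h0
  have hneB : (fr A).Nonempty := ⟨a + 1, (hmemB _).2 (Or.inl rfl)⟩
  have hmxxB : mxx (fr A) = a + 1 := by
    apply le_antisymm
    · apply Finset.sup_le
      intro x hx
      rcases (hmemB x).1 hx with h | h
      · simp only [id_eq]; omega
      · have := le_mxx h.1; simp only [id_eq]; omega
    · exact le_mxx ((hmemB _).2 (Or.inl rfl))
  have hmnnB : s < mnn (fr A) := by
    rcases (hmemB _).1 (mnn_mem hneB) with h | h
    · omega
    · have h2 := mnn_le h.1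
      rcases lt_or_eq_of_le h2 with h3 | h3
      · exact h3
      · exact absurd h3.symm h.2.1
  have hrunB : ∀ i, i < s → a + 1 - i ∈ fr A := by
    intro i hi
    rcases Nat.eq_zero_or_pos i with h | h
    · subst h; exact (hmemB _).2 (Or.inl (by omega))
    · refine (hmemB _).2 (Or.inr ⟨?_, by omega, by omega⟩)
      apply stair_run h0 hne <;> omega
  have hstairB : stair (fr A) = s := by
    have hsin : s ∈ {i : ℕ | 0 < i ∧ mxx (fr A) - i ∉ fr A} := by
      refine ⟨hspos, ?_⟩
      rw [hmxxB]
      intro hmem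
      rcases (hmemB _).1 hmem with h | h
      · omega
      · exact h.2.2 rfl
    have hle1 : stair (fr A) ≤ s := Nat.sInf_le hsin
    rcases lt_or_eq_of_le hle1 with hlt | heq
    · exfalso
      have h1 := stair_notMem h0B hneB
      rw [hmxxB] at h1
      exact h1 (hrunB (stair (fr A)) hlt)
    · exact heq
  have hexcB : ¬ Exc (fr A) := by
    rintro ⟨r, hr, hcase⟩
    have hIcc : ∃ u v : ℕ, fr A = Finset.Icc u v ∧ (2 * u = v + 1 ∨ 2 * u = v + 2) := by
      rcases hcase with h | h
      · exact ⟨r, 2*r - 1, h, Or.inl (by omega)⟩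
      · exact ⟨r + 1, 2*r, h, Or.inr (by omega)⟩
    obtain ⟨u, v, hBI, huv⟩ := hIcc
    have hvB : a + 1 ≤ v := by
      have := (hmemB _).2 (Or.inl rfl)
      rw [hBI, Finset.mem_Icc] at this
      omega
    have huv2 : u ≤ v := by
      have := hneB
      rw [hBI] at this
      exact (Finset.nonempty_Icc).1 this
    have hvB2 : v ≤ a + 1 := by
      have : v ∈ fr A := by rw [hBI, Finset.mem_Icc]; omega
      have := le_mxx this
      omega
    have hu : a + 1 - s < u := by
      by_contra hcon
      push_neg at hcon
      have hmem : a + 1 - s ∈ fr A := by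
        rw [hBI, Finset.mem_Icc]; omega
      rcases (hmemB _).1 hmem with h | h
      · omega
      · exact h.2.2 rfl
    omega
  have hstep : fr (fr A) = A := by
    have hcond : ¬ (mnn (fr A) ≤ stair (fr A)) := by omega
    rw [fr, if_neg hcond, hstairB, hmxxB]
    have h2 : (fr A).erase (a + 1) = C := by
      rw [hfrA]; exact Finset.erase_insert hnotin
    rw [h2]
    have h3 : insert (a + 1 - s) C = A.erase s := Finset.insert_erase hin1
    rw [h3, Finset.insert_erase hsmem]
  exact ⟨h0B, hsum, hcard, hexcB, hstep⟩

lemma step2 (hlt : stair A < mnn A) :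
    0 ∉ fr A ∧ (fr A).sum id = A.sum id ∧ (fr A).card = A.card + 1 ∧
      ¬ Exc (fr A) ∧ fr (fr A) = A := by
  set a := mxx A with ha
  set s := mnn A with hs
  set t := stair A with ht
  have hamem : a ∈ A := mxx_mem hne
  have hspos : 0 < s := mnn_pos h0 hne
  have hsale : s ≤ a := mnn_le hamem
  have htle : t ≤ a := stair_le h0 hne
  have htpos : 0 < t := stair_pos h0 hne
  have htnot : a - t ∉ A := stair_notMem h0 hne
  -- a - (t-1) ∈ A hence s ≤ a - t + 1
  have hneeded : a - t + 1 ∈ A := by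
    apply stair_run h0 hne <;> omega
  have hsle : s ≤ a - t + 1 := mnn_le hneeded
  have h2t : 2 * t ≤ a := by omega
  -- non-exceptional : a ≠ 2t
  have h2t' : 2 * t + 1 ≤ a := by
    rcases lt_or_eq_of_le h2t with h | h
    · omega
    · exfalso
      apply hexc
      refine ⟨t, htpos, Or.inr ?_⟩
      ext x
      simp only [Finset.mem_Icc]
      constructor
      · intro hx
        have h1 := mnn_le hx
        have h2 := le_mxx hx
        omega
      · intro ⟨hx1, hx2⟩
        apply stair_run h0 hne <;> omega
  have htnotA : t ∉ A := fun hmem => absurd (mnn_le hmem) (by omega)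
  have hatnot : a - t ∉ A.erase a := fun hmem => htnot (Finset.mem_of_mem_erase hmem)
  have htnot2 : t ∉ insert (a - t) (A.erase a) := by
    intro hmem
    rcases Finset.mem_insert.1 hmem with h | h
    · omega
    · exact htnotA (Finset.mem_of_mem_erase h)
  have hfrA : fr A = insert t (insert (a - t) (A.erase a)) := by
    rw [fr, if_neg (by omega)]
  have hmemB : ∀ x, x ∈ fr A ↔ x = t ∨ x = a - t ∨ (x ∈ A ∧ x ≠ a) := by
    intro x
    rw [hfrA]
    simp only [Finset.mem_insert, Finset.mem_erase]
    tauto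
  have hsum1 : (A.erase a).sum id + a = A.sum id := Finset.sum_erase_add _ _ hamem
  have hsumB : (fr A).sum id = t + ((a - t) + (A.erase a).sum id) := by
    rw [hfrA, Finset.sum_insert htnot2, Finset.sum_insert hatnot]; rfl
  have hsum : (fr A).sum id = A.sum id := by omega
  have hcard1 : (A.erase a).card + 1 = A.card := Finset.card_erase_add_one hamem
  have hcard : (fr A).card = A.card + 1 := by
    rw [hfrA, Finset.card_insert_of_notMem htnot2, Finset.card_insert_of_notMem hatnot]
    omega
  have h0B : 0 ∉ fr A := by
    rw [hmemB]
    push_neg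
    refine ⟨by omega, by omega, fun hmem => absurd hmem h0⟩
  have hneB : (fr A).Nonempty := ⟨t, (hmemB _).2 (Or.inl rfl)⟩
  have hmxxB : mxx (fr A) = a - 1 := by
    apply le_antisymm
    · apply Finset.sup_le
      intro x hx
      simp only [id_eq]
      rcases (hmemB x).1 hx with h | h | h
      · omega
      · omega
      · have h1 := le_mxx h.1
        have := h.2
        omega
    · apply le_mxx
      rcases Nat.eq_or_lt_of_le htpos with h1 | h1
      · exact (hmemB _).2 (Or.inr (Or.inl (by omega)))
      · refine (hmemB _).2 (Or.inr (Or.inr ⟨?_, by omega⟩))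
        apply stair_run h0 hne <;> omega
  have hmnnB : mnn (fr A) = t := by
    apply le_antisymm
    · exact mnn_le ((hmemB _).2 (Or.inl rfl))
    · rcases (hmemB _).1 (mnn_mem hneB) with h | h | h
      · omega
      · omega
      · have := mnn_le h.1; omega
  have hrunB : ∀ i, i < t → (a - 1) - i ∈ fr A := by
    intro i hi
    rcases Nat.eq_or_lt_of_le (Nat.succ_le_of_lt hi) with h1 | h1
    · exact (hmemB _).2 (Or.inr (Or.inl (by omega)))
    · refine (hmemB _).2 (Or.inr (Or.inr ⟨?_, by omega⟩))
      apply stair_run h0 hne <;> omega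
  have hstairB : t ≤ stair (fr A) := by
    by_contra hcon
    push_neg at hcon
    have h1 := stair_notMem h0B hneB
    have h2 := stair_pos h0B hneB
    rw [hmxxB] at h1
    exact h1 (hrunB (stair (fr A)) hcon)
  have hexcB : ¬ Exc (fr A) := by
    rintro ⟨r, hr, hcase⟩
    have hIcc : ∃ u v : ℕ, fr A = Finset.Icc u v ∧ 0 < u ∧ (2 * u = v + 1 ∨ 2 * u = v + 2) := by
      rcases hcase with h | h
      · exact ⟨r, 2*r - 1, h, hr, Or.inl (by omega)⟩
      · exact ⟨r + 1, 2*r, h, by omega, Or.inr (by omega)⟩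
    obtain ⟨u, v, hBI, hu0, huv⟩ := hIcc
    have huv2 : u ≤ v := by
      have := hneB
      rw [hBI] at this
      exact (Finset.nonempty_Icc).1 this
    have huB : u = t := by
      have h1 : u ∈ fr A := by rw [hBI, Finset.mem_Icc]; omega
      have h2 := mnn_le h1
      have h3 : t ∈ fr A := (hmemB _).2 (Or.inl rfl)
      rw [hBI, Finset.mem_Icc] at h3
      omega
    have hvB : v = a - 1 := by
      have h1 : v ∈ fr A := by rw [hBI, Finset.mem_Icc]; omega
      have h2 := le_mxx h1
      rw [hmxxB] at h2
      have h3 : a - 1 ∈ fr A := by rw [← hmxxB]; exact mxx_mem hneB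
      rw [hBI, Finset.mem_Icc] at h3
      omega
    omega
  have hstep : fr (fr A) = A := by
    have hcond : mnn (fr A) ≤ stair (fr A) := by omega
    rw [fr, if_pos hcond, hmnnB, hmxxB]
    have he1 : a - 1 + 1 = a := by omega
    rw [he1]
    have h2 : (fr A).erase t = insert (a - t) (A.erase a) := by
      rw [hfrA]; exact Finset.erase_insert htnot2
    rw [h2, Finset.erase_insert hatnot, Finset.insert_erase hamem]
  exact ⟨h0B, hsum, hcard, hexcB, hstep⟩

end

open scoped Classical in
noncomputable def Sfin (n : ℕ) : Finset (Finset ℕ) :=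
  (Finset.range (n+1)).powerset.filter (fun A => 0 ∉ A ∧ A.sum id = n)

lemma mem_Sfin {n : ℕ} {A : Finset ℕ} : A ∈ Sfin n ↔ 0 ∉ A ∧ A.sum id = n := by
  classical
  rw [Sfin]
  simp only [Finset.mem_filter, Finset.mem_powerset]
  constructor
  · tauto
  · intro h
    refine ⟨fun x hx => ?_, h⟩
    have : id x ≤ A.sum id := Finset.single_le_sum (by intro i _; exact Nat.zero_le _) hx
    simp only [id_eq] at this
    have h4 : (∑ x ∈ A, x) = n := by simpa using h.2
    rw [Finset.mem_range]
    omega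

lemma Sfin_nonempty_mem {n : ℕ} (hn : 0 < n) {A : Finset ℕ} (hA : A ∈ Sfin n) : A.Nonempty := by
  rcases Finset.eq_empty_or_nonempty A with h | h
  · exfalso
    rw [mem_Sfin] at hA
    rw [h] at hA
    simp at hA
    omega
  · exact h

open scoped Classical in
lemma invol_sum {n : ℕ} (hn : 0 < n) :
    ∑ A ∈ (Sfin n).filter (fun A => ¬ Exc A), (-1 : ℤ) ^ A.card = 0 := by
  classical
  apply Finset.sum_involution (g := fun A _ => fr A)
  · intro A hA
    rw [Finset.mem_filter, mem_Sfin] at hA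
    obtain ⟨⟨h0, hsum⟩, hexc⟩ := hA
    have hne : A.Nonempty := by
      rcases Finset.eq_empty_or_nonempty A with h | h
      · exfalso; rw [h] at hsum; simp at hsum; omega
      · exact h
    rcases le_or_gt (mnn A) (stair A) with hc | hc
    · obtain ⟨_, _, hcard, _, _⟩ := step1 h0 hne hexc hc
      rw [← hcard, pow_succ]
      ring
    · obtain ⟨_, _, hcard, _, _⟩ := step2 h0 hne hexc hc
      rw [hcard, pow_succ]
      ring
  · intro A hA _
    rw [Finset.mem_filter, mem_Sfin] at hA
    obtain ⟨⟨h0, hsum⟩, hexc⟩ := hA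
    have hne : A.Nonempty := by
      rcases Finset.eq_empty_or_nonempty A with h | h
      · exfalso; rw [h] at hsum; simp at hsum; omega
      · exact h
    intro heq
    rcases le_or_gt (mnn A) (stair A) with hc | hc
    · obtain ⟨_, _, hcard, _, _⟩ := step1 h0 hne hexc hc
      rw [heq] at hcard
      omega
    · obtain ⟨_, _, hcard, _, _⟩ := step2 h0 hne hexc hc
      rw [heq] at hcard
      omega
  · intro A hA
    rw [Finset.mem_filter, mem_Sfin] at hA
    obtain ⟨⟨h0, hsum⟩, hexc⟩ := hA
    have hne : A.Nonempty := by
      rcases Finset.eq_empty_or_nonempty A with h | h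
      · exfalso; rw [h] at hsum; simp at hsum; omega
      · exact h
    rw [Finset.mem_filter, mem_Sfin]
    rcases le_or_gt (mnn A) (stair A) with hc | hc
    · obtain ⟨h1, h2, _, h4, _⟩ := step1 h0 hne hexc hc
      exact ⟨⟨h1, h2.trans hsum⟩, h4⟩
    · obtain ⟨h1, h2, _, h4, _⟩ := step2 h0 hne hexc hc
      exact ⟨⟨h1, h2.trans hsum⟩, h4⟩
  · intro A hA
    rw [Finset.mem_filter, mem_Sfin] at hA
    obtain ⟨⟨h0, hsum⟩, hexc⟩ := hA
    have hne : A.Nonempty := by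
      rcases Finset.eq_empty_or_nonempty A with h | h
      · exfalso; rw [h] at hsum; simp at hsum; omega
      · exact h
    rcases le_or_gt (mnn A) (stair A) with hc | hc
    · exact (step1 h0 hne hexc hc).2.2.2.2
    · exact (step2 h0 hne hexc hc).2.2.2.2

lemma two_mul_sum_Icc (u v : ℕ) (h : u ≤ v) :
    2 * (∑ i ∈ Finset.Icc u v, i) = (u + v) * (v + 1 - u) := by
  rw [← Finset.Ico_add_one_right_eq_Icc, Finset.sum_Ico_eq_sum_range]
  have h2 := Finset.sum_range_id_mul_two (v + 1 - u)
  have h3 : ∑ i ∈ Finset.range (v + 1 - u), (u + i)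
      = (v + 1 - u) * u + ∑ i ∈ Finset.range (v + 1 - u), i := by
    rw [Finset.sum_add_distrib, Finset.sum_const, Finset.card_range, smul_eq_mul]
  rw [h3]
  obtain ⟨w1, hw1, hv1⟩ : ∃ w1, v + 1 - u = w1 + 1 ∧ v = u + w1 := ⟨v - u, by omega, by omega⟩
  rw [hw1] at h2 ⊢
  simp only [Nat.add_sub_cancel] at h2
  subst hv1
  nlinarith [h2]

lemma pent_arith {m r : ℕ} (hm : 0 < m) (hr : 0 < r) :
    (m * (3*m+1) = r * (3*r+1) → m = r) ∧
    (m * (3*m-1) = r * (3*r-1) → m = r) ∧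
    (m * (3*m+1) ≠ r * (3*r-1)) := by
  obtain ⟨m', rfl⟩ : ∃ m', m = m' + 1 := ⟨m - 1, by omega⟩
  obtain ⟨r', rfl⟩ : ∃ r', r = r' + 1 := ⟨r - 1, by omega⟩
  have e1 : 3 * (m' + 1) - 1 = 3 * m' + 2 := by omega
  have e2 : 3 * (r' + 1) - 1 = 3 * r' + 2 := by omega
  rw [e1, e2]
  refine ⟨?_, ?_, ?_⟩
  · intro h
    rcases lt_trichotomy m' r' with hc | hc | hc
    · exfalso
      zify at h
      have hc' : (m' : ℤ) + 1 ≤ r' := by exact_mod_cast hc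
      nlinarith [hc', h]
    · omega
    · exfalso
      zify at h
      have hc' : (r' : ℤ) + 1 ≤ m' := by exact_mod_cast hc
      nlinarith [hc', h]
  · intro h
    rcases lt_trichotomy m' r' with hc | hc | hc
    · exfalso
      zify at h
      have hc' : (m' : ℤ) + 1 ≤ r' := by exact_mod_cast hc
      nlinarith [hc', h]
    · omega
    · exfalso
      zify at h
      have hc' : (r' : ℤ) + 1 ≤ m' := by exact_mod_cast hc
      nlinarith [hc', h]
  · intro h
    rcases lt_trichotomy m' r' with hc | hc | hc
    · zify at h
      have hc' : (m' : ℤ) + 1 ≤ r' := by exact_mod_cast hc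
      nlinarith [hc', h]
    · zify at h
      subst hc
      nlinarith [h]
    · zify at h
      have hc' : (r' : ℤ) + 1 ≤ m' := by exact_mod_cast hc
      nlinarith [hc', h]

lemma Icc_sum_1 {r : ℕ} (hr : 0 < r) : 2 * (∑ i ∈ Finset.Icc r (2*r-1), i) = r * (3*r-1) := by
  rw [two_mul_sum_Icc r (2*r-1) (by omega)]
  have : 2*r - 1 + 1 - r = r := by omega
  rw [this]
  have : r + (2*r - 1) = 3*r - 1 := by omega
  rw [this, Nat.mul_comm]

lemma Icc_sum_2 {r : ℕ} (hr : 0 < r) : 2 * (∑ i ∈ Finset.Icc (r+1) (2*r), i) = r * (3*r+1) := by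
  rw [two_mul_sum_Icc (r+1) (2*r) (by omega)]
  have : 2*r + 1 - (r+1) = r := by omega
  rw [this]
  have : r + 1 + 2*r = 3*r + 1 := by omega
  rw [this, Nat.mul_comm]

lemma sum_id_eq {A : Finset ℕ} : A.sum id = ∑ i ∈ A, i := rfl

lemma exc_mem_char {A : Finset ℕ} {n : ℕ} (hA : A ∈ Sfin n) (h : Exc A) :
    ∃ r, 0 < r ∧ ((2 * n = r * (3*r - 1) ∧ A = Finset.Icc r (2*r-1)) ∨
      (2 * n = r * (3*r + 1) ∧ A = Finset.Icc (r+1) (2*r))) := by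
  rw [mem_Sfin] at hA
  obtain ⟨r, hr, hc | hc⟩ := h
  · refine ⟨r, hr, Or.inl ⟨?_, hc⟩⟩
    rw [← hA.2, hc, sum_id_eq, Icc_sum_1 hr]
  · refine ⟨r, hr, Or.inr ⟨?_, hc⟩⟩
    rw [← hA.2, hc, sum_id_eq, Icc_sum_2 hr]

lemma Icc1_mem {r n : ℕ} (hr : 0 < r) (h : 2*n = r*(3*r-1)) :
    Finset.Icc r (2*r-1) ∈ Sfin n ∧ Exc (Finset.Icc r (2*r-1)) ∧
      (Finset.Icc r (2*r-1)).card = r := by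
  refine ⟨?_, ⟨r, hr, Or.inl rfl⟩, ?_⟩
  · rw [mem_Sfin]
    constructor
    · rw [Finset.mem_Icc]; omega
    · rw [sum_id_eq]
      have := Icc_sum_1 hr
      omega
  · rw [Nat.card_Icc]; omega

lemma Icc2_mem {r n : ℕ} (hr : 0 < r) (h : 2*n = r*(3*r+1)) :
    Finset.Icc (r+1) (2*r) ∈ Sfin n ∧ Exc (Finset.Icc (r+1) (2*r)) ∧
      (Finset.Icc (r+1) (2*r)).card = r := by
  refine ⟨?_, ⟨r, hr, Or.inr rfl⟩, ?_⟩
  · rw [mem_Sfin]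
    constructor
    · rw [Finset.mem_Icc]; omega
    · rw [sum_id_eq]
      have := Icc_sum_2 hr
      omega
  · rw [Nat.card_Icc]; omega

open scoped Classical in
lemma sum_eval_pent {n m : ℕ} (hn : 0 < n) (hm : 0 < m)
    (hp : 2*n = m*(3*m+1) ∨ 2*n = m*(3*m-1)) :
    ∑ A ∈ Sfin n, (-1:ℤ)^A.card = (-1)^m := by
  classical
  have hsplit := Finset.sum_filter_add_sum_filter_not (Sfin n) (fun A => Exc A)
    (fun A => (-1:ℤ)^A.card)
  rw [← hsplit, invol_sum hn, add_zero]
  rcases hp with hp | hp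
  · have hE := Icc2_mem hm hp
    have hfil : (Sfin n).filter (fun A => Exc A) = {Finset.Icc (m+1) (2*m)} := by
      ext A
      simp only [Finset.mem_filter, Finset.mem_singleton]
      constructor
      · rintro ⟨hA, hexc⟩
        obtain ⟨r, hr, ⟨hr2, hAe⟩ | ⟨hr2, hAe⟩⟩ := exc_mem_char hA hexc
        · exact absurd (hp ▸ hr2) (pent_arith hm hr).2.2
        · have : m = r := (pent_arith hm hr).1 (by omega)
          rw [hAe, this]
      · intro hA
        rw [hA]
        exact ⟨hE.1, hE.2.1⟩
    rw [hfil, Finset.sum_singleton, hE.2.2]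
  · have hE := Icc1_mem hm hp
    have hfil : (Sfin n).filter (fun A => Exc A) = {Finset.Icc m (2*m-1)} := by
      ext A
      simp only [Finset.mem_filter, Finset.mem_singleton]
      constructor
      · rintro ⟨hA, hexc⟩
        obtain ⟨r, hr, ⟨hr2, hAe⟩ | ⟨hr2, hAe⟩⟩ := exc_mem_char hA hexc
        · have : m = r := (pent_arith hm hr).2.1 (by omega)
          rw [hAe, this]
        · exact absurd (hp ▸ hr2).symm (pent_arith hr hm).2.2
      · intro hA
        rw [hA]
        exact ⟨hE.1, hE.2.1⟩
    rw [hfil, Finset.sum_singleton, hE.2.2]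

open scoped Classical in
lemma sum_eval_nonpent {n : ℕ} (hn : 0 < n)
    (hp : ¬ ∃ m : ℕ, 0 < m ∧ (2 * n = m * (3 * m + 1) ∨ 2 * n = m * (3 * m - 1))) :
    ∑ A ∈ Sfin n, (-1:ℤ)^A.card = 0 := by
  classical
  have hsplit := Finset.sum_filter_add_sum_filter_not (Sfin n) (fun A => Exc A)
    (fun A => (-1:ℤ)^A.card)
  rw [← hsplit, invol_sum hn, add_zero]
  have hfil : (Sfin n).filter (fun A => Exc A) = ∅ := by
    ext A
    simp only [Finset.mem_filter, Finset.notMem_empty, iff_false]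
    rintro ⟨hA, hexc⟩
    obtain ⟨r, hr, ⟨hr2, _⟩ | ⟨hr2, _⟩⟩ := exc_mem_char hA hexc
    · exact hp ⟨r, hr, Or.inr hr2⟩
    · exact hp ⟨r, hr, Or.inl hr2⟩
  rw [hfil, Finset.sum_empty]

open scoped Classical in
lemma diff_counts (n : ℕ) :
    (((Sfin n).filter (fun A => Even A.card)).card : ℤ)
      - (((Sfin n).filter (fun A => Odd A.card)).card : ℤ)
      = ∑ A ∈ Sfin n, (-1:ℤ)^A.card := by
  classical
  have hsplit := Finset.sum_filter_add_sum_filter_not (Sfin n) (fun A => Even A.card)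
    (fun A => (-1:ℤ)^A.card)
  rw [← hsplit]
  have h1 : ∑ A ∈ (Sfin n).filter (fun A => Even A.card), (-1:ℤ)^A.card
      = (((Sfin n).filter (fun A => Even A.card)).card : ℤ) := by
    rw [Finset.sum_congr rfl (fun A hA => (Finset.mem_filter.1 hA).2.neg_one_pow)]
    simp
  have h2eq : (Sfin n).filter (fun A => ¬ Even A.card)
      = (Sfin n).filter (fun A => Odd A.card) := by
    apply Finset.filter_congr
    intro A _
    exact Nat.not_even_iff_odd
  have h2 : ∑ A ∈ (Sfin n).filter (fun A => ¬ Even A.card), (-1:ℤ)^A.card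
      = -((((Sfin n).filter (fun A => Odd A.card)).card : ℤ)) := by
    rw [h2eq]
    rw [Finset.sum_congr rfl (fun A hA => (Finset.mem_filter.1 hA).2.neg_one_pow)]
    simp
  rw [h1, h2]
  ring

open scoped Classical in
lemma Dcount_eq (k n : ℕ) (hn : 0 < n) (hnk : n < k) (p : ℕ → Prop) [DecidablePred p] :
    Set.ncard {M : Multiset ℕ | M.sum = n ∧
      ∃ s ∈ M, (∀ x ∈ M, s ≤ x) ∧ M.count s = k ∧
        (∀ x ∈ M, x ≠ s → M.count x = 1) ∧ p ((M.filter (fun x => s < x)).card)}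
    = ((Sfin n).filter (fun A => p A.card)).card := by
  classical
  have hinj : Function.Injective (fun A : Finset ℕ => Multiset.replicate k 0 + A.val) := by
    intro A B h
    simp only at h
    exact Finset.val_injective (by exact add_left_cancel h)
  have hset : {M : Multiset ℕ | M.sum = n ∧
      ∃ s ∈ M, (∀ x ∈ M, s ≤ x) ∧ M.count s = k ∧
        (∀ x ∈ M, x ≠ s → M.count x = 1) ∧ p ((M.filter (fun x => s < x)).card)}
      = (fun A : Finset ℕ => Multiset.replicate k 0 + A.val) ''
        ↑((Sfin n).filter (fun A => p A.card)) := by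
    ext M
    simp only [Set.mem_setOf_eq, Set.mem_image, Finset.mem_coe, Finset.mem_filter]
    constructor
    · rintro ⟨hsum, s, hsmem, hmin, hcount, hone, hp⟩
      have hk0 : 0 < k := by omega
      have hrep : Multiset.replicate k s ≤ M :=
        Multiset.le_count_iff_replicate_le.1 hcount.ge
      obtain ⟨u, hu⟩ := Multiset.le_iff_exists_add.1 hrep
      have hs0 : s = 0 := by
        by_contra hs
        have h1 : k * s ≤ M.sum := by
          rw [hu, Multiset.sum_add, Multiset.sum_replicate, smul_eq_mul]
          omega
        have h2 : 1 ≤ s := by omega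
        have h3 : k ≤ k * s := by
          calc k = k * 1 := by ring
          _ ≤ k * s := Nat.mul_le_mul_left k h2
        omega
      subst hs0
      have hnodup : (M.filter (fun x => 0 < x)).Nodup := by
        rw [Multiset.nodup_iff_count_le_one]
        intro x
        rw [Multiset.count_filter]
        by_cases hx : 0 < x
        · simp only [if_pos hx]
          by_cases hxm : x ∈ M
          · rw [hone x hxm (by omega)]
          · rw [Multiset.count_eq_zero.2 hxm]; omega
        · simp [hx]
      refine ⟨⟨M.filter (fun x => 0 < x), hnodup⟩, ⟨?_, hp⟩, ?_⟩
      · rw [mem_Sfin]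
        constructor
        · intro hmem
          have := Finset.mem_mk.1 hmem
          have := Multiset.of_mem_filter this
          omega
        · have hMeq : M = Multiset.replicate k 0 + M.filter (fun x => 0 < x) := by
            ext b
            rw [Multiset.count_add, Multiset.count_replicate, Multiset.count_filter]
            by_cases hb : b = 0
            · subst hb
              rw [if_pos rfl, if_neg (lt_irrefl 0)]
              omega
            · rw [if_neg (by omega), if_pos (by omega)]
              omega
          have h5 : M.sum = (M.filter (fun x => 0 < x)).sum := by
            conv_lhs => rw [hMeq]
            rw [Multiset.sum_add, Multiset.sum_replicate]
            simp
          show Multiset.sum (Multiset.map id _) = n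
          rw [Multiset.map_id]
          show (M.filter (fun x => 0 < x)).sum = n
          omega
      · show Multiset.replicate k 0 + M.filter (fun x => 0 < x) = M
        ext b
        rw [Multiset.count_add, Multiset.count_replicate, Multiset.count_filter]
        by_cases hb : b = 0
        · subst hb
          rw [if_pos rfl, if_neg (lt_irrefl 0)]
          omega
        · rw [if_neg (by omega), if_pos (by omega)]
          omega
    · rintro ⟨A, ⟨hAS, hAp⟩, rfl⟩
      rw [mem_Sfin] at hAS
      obtain ⟨h0A, hsumA⟩ := hAS
      have hk0 : 0 < k := by omega
      have hpos : ∀ x ∈ A.val, 0 < x := by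
        intro x hx
        exact Nat.pos_of_ne_zero (fun h => h0A (by rwa [h] at hx))
      have h0nA : (0 : ℕ) ∉ A.val := h0A
      have hsumval : A.val.sum = n := by
        have : A.sum id = Multiset.sum (Multiset.map id A.val) := rfl
        rw [Multiset.map_id] at this
        omega
      have hcnt0 : Multiset.count 0 (Multiset.replicate k 0 + A.val) = k := by
        rw [Multiset.count_add, Multiset.count_replicate, if_pos rfl,
          Multiset.count_eq_zero.2 h0nA]
        omega
      refine ⟨?_, 0, ?_, fun x _ => Nat.zero_le x, hcnt0, ?_, ?_⟩
      · rw [Multiset.sum_add, Multiset.sum_replicate]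
        simp [hsumval]
      · rw [← Multiset.count_pos, hcnt0]
        omega
      · intro x hx hx0
        have hxA : x ∈ A.val := by
          rcases Multiset.mem_add.1 hx with h | h
          · exact absurd (Multiset.eq_of_mem_replicate h) hx0
          · exact h
        rw [Multiset.count_add, Multiset.count_replicate, if_neg (fun h => hx0 h.symm),
          Multiset.count_eq_one_of_mem A.nodup hxA]
      · have hfil : (Multiset.replicate k 0 + A.val).filter (fun x => 0 < x) = A.val := by
          rw [Multiset.filter_add]
          have h1 : (Multiset.replicate k 0).filter (fun x => (0:ℕ) < x) = 0 := by
            apply Multiset.filter_eq_nil.2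
            intro a ha
            have := Multiset.eq_of_mem_replicate ha
            omega
          rw [h1, Multiset.filter_eq_self.2 hpos, zero_add]
        rw [hfil]
        exact hAp
  rw [hset, Set.ncard_image_of_injective _ hinj, Set.ncard_coe_finset]

end PNT


/-- `DcountE k n`: partitions of `n` into non-negative parts (multisets of naturals
summing to `n`, `0` allowed) whose smallest part occurs exactly `k` times, all
other parts occurring once, with an even number of parts exceeding the smallest. -/
noncomputable def DcountE (k n : ℕ) : ℕ :=
  Set.ncard {M : Multiset ℕ | M.sum = n ∧
    ∃ s ∈ M, (∀ x ∈ M, s ≤ x) ∧ M.count s = k ∧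
      (∀ x ∈ M, x ≠ s → M.count x = 1) ∧
      Even (M.filter (fun x => s < x)).card}

/-- `DcountO k n`: same, with an odd number of parts exceeding the smallest. -/
noncomputable def DcountO (k n : ℕ) : ℕ :=
  Set.ncard {M : Multiset ℕ | M.sum = n ∧
    ∃ s ∈ M, (∀ x ∈ M, s ≤ x) ∧ M.count s = k ∧
      (∀ x ∈ M, x ≠ s → M.count x = 1) ∧
      Odd (M.filter (fun x => s < x)).card}

/-- For `1 ≤ n ≤ k-1`: if `n = m(3m±1)/2` for a positive integer `m`, then
`D_k^e(n) - D_k^o(n) = (-1)^m`; otherwise `D_k^e(n) = D_k^o(n)`. -/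
theorem D_diff_pentagonal (k n : ℕ) (h1 : 1 ≤ n) (h2 : n ≤ k - 1) :
    (∀ m : ℕ, 0 < m → (2 * n = m * (3 * m + 1) ∨ 2 * n = m * (3 * m - 1)) →
      (DcountE k n : ℤ) - DcountO k n = (-1 : ℤ) ^ m) ∧
    ((¬ ∃ m : ℕ, 0 < m ∧ (2 * n = m * (3 * m + 1) ∨ 2 * n = m * (3 * m - 1))) →
      DcountE k n = DcountO k n) := by
  classical
  have hn : 0 < n := h1
  have hnk : n < k := by omega
  have hE : DcountE k n = ((PNT.Sfin n).filter (fun A => Even A.card)).card := by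
    rw [DcountE]
    exact PNT.Dcount_eq k n hn hnk Even
  have hO : DcountO k n = ((PNT.Sfin n).filter (fun A => Odd A.card)).card := by
    rw [DcountO]
    exact PNT.Dcount_eq k n hn hnk Odd
  have hdiff : (DcountE k n : ℤ) - DcountO k n = ∑ A ∈ PNT.Sfin n, (-1:ℤ)^A.card := by
    rw [hE, hO, PNT.diff_counts]
  constructor
  · intro m hm hp
    rw [hdiff, PNT.sum_eval_pent hn hm hp]
  · intro hp
    have h0 := PNT.sum_eval_nonpent hn hp
    rw [h0] at hdiff
    omega
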